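/- Let E and F be Banach lattices. A continuous operator T : E → F is weak L-weakly compact if and only if its adjoint T' : F' → E' is weak M-weakly compact. -/

import Mathlib

open Filter Topology Bornology

/-- A sequence in a normed lattice is unbounded-norm (un-) null if `‖ |xₙ| ⊓ u ‖ → 0`
for every positive `u`. -/
def UnNullSeq {G : Type*} [NormedAddCommGroup G] [Lattice G] [HasSolidNorm G] [IsOrderedAddMonoid G] (x : ℕ → G) : Prop :=
  ∀ u : G, 0 ≤ u → Tendsto (fun n => ‖|x n| ⊓ u‖) atTop (𝓝 0)

/-- A pairwise disjoint sequence. -/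
def DisjointSeq {G : Type*} [NormedAddCommGroup G] [Lattice G] [HasSolidNorm G] [IsOrderedAddMonoid G] (x : ℕ → G) : Prop :=
  Pairwise fun n m => |x n| ⊓ |x m| = 0

/-- A norm bounded sequence. -/
def NormBddSeq {G : Type*} [NormedAddCommGroup G] [Lattice G] [HasSolidNorm G] [IsOrderedAddMonoid G] (x : ℕ → G) : Prop :=
  ∃ C : ℝ, ∀ n, ‖x n‖ ≤ C

/-- The solid hull of a set. -/
def SolidHull {G : Type*} [NormedAddCommGroup G] [Lattice G] [HasSolidNorm G] [IsOrderedAddMonoid G] (A : Set G) : Set G :=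
  {x | ∃ y ∈ A, |x| ≤ |y|}

/-- A bounded set is L-weakly compact if every disjoint sequence in its solid hull is
norm null. -/
def LWCSet {G : Type*} [NormedAddCommGroup G] [Lattice G] [HasSolidNorm G] [IsOrderedAddMonoid G] (A : Set G) : Prop :=
  IsBounded A ∧ ∀ x : ℕ → G, (∀ n, x n ∈ SolidHull A) → DisjointSeq x →
    Tendsto (fun n => ‖x n‖) atTop (𝓝 0)

/-- The norm is order continuous: every net decreasing to `0` is norm null. -/
def OrderContNorm (G : Type*) [NormedAddCommGroup G] [Lattice G] [HasSolidNorm G] [IsOrderedAddMonoid G] : Prop :=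
  ∀ (ι : Type) [SemilatticeSup ι] [Nonempty ι] (x : ι → G),
    Antitone x → IsGLB (Set.range x) 0 → Tendsto (fun i => ‖x i‖) atTop (𝓝 0)

/-- Dedekind σ-completeness: every bounded-above increasing sequence has a supremum. -/
def DedekindSigmaComplete (G : Type*) [NormedAddCommGroup G] [Lattice G] [HasSolidNorm G] [IsOrderedAddMonoid G] : Prop :=
  ∀ x : ℕ → G, Monotone x → (∃ b, ∀ n, x n ≤ b) → ∃ s, IsLUB (Set.range x) s

/-- An atom of a Banach lattice. -/
def IsLatticeAtom {G : Type*} [NormedAddCommGroup G] [Lattice G] [HasSolidNorm G] [IsOrderedAddMonoid G] [NormedSpace ℝ G] (a : G) : Prop :=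
  0 < a ∧ ∀ x : G, 0 ≤ x → x ≤ a → ∃ c : ℝ, x = c • a

/-- An atomic Banach lattice: every nonzero positive element dominates an atom. -/
def AtomicLattice (G : Type*) [NormedAddCommGroup G] [Lattice G] [HasSolidNorm G] [IsOrderedAddMonoid G] [NormedSpace ℝ G] : Prop :=
  ∀ x : G, 0 < x → ∃ a, IsLatticeAtom a ∧ a ≤ x

/-- A realization of the Banach lattice `E'` as the topological dual of the Banach lattice
`E`: a linear isometric isomorphism onto `NormedSpace.Dual ℝ E` that identifies the order. -/
structure DualPairing (E E' : Type*) [NormedAddCommGroup E] [Lattice E] [HasSolidNorm E] [IsOrderedAddMonoid E] [NormedSpace ℝ E]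
    [NormedAddCommGroup E'] [Lattice E'] [HasSolidNorm E'] [IsOrderedAddMonoid E'] [NormedSpace ℝ E'] where
  toDual : E' ≃ₗᵢ[ℝ] StrongDual ℝ E
  pos_iff : ∀ f : E', 0 ≤ f ↔ ∀ x : E, 0 ≤ x → 0 ≤ toDual f x

section Pairing

variable {E E' : Type*} [NormedAddCommGroup E] [Lattice E] [HasSolidNorm E] [IsOrderedAddMonoid E] [NormedSpace ℝ E]
  [NormedAddCommGroup E'] [Lattice E'] [HasSolidNorm E'] [IsOrderedAddMonoid E'] [NormedSpace ℝ E']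

/-- A bounded set `A ⊆ E` is weak L-weakly compact if `sup_{x ∈ A} |x'ₙ(x)| → 0` for every
norm bounded un-null sequence `(x'ₙ)` in the dual `E'`. -/
def WeakLWCSet (P : DualPairing E E') (A : Set E) : Prop :=
  IsBounded A ∧ ∀ f : ℕ → E', NormBddSeq f → UnNullSeq f →
    Tendsto (fun n => ⨆ x ∈ A, |P.toDual (f n) x|) atTop (𝓝 0)

/-- A bounded set `B ⊆ E'` is weak* L-weakly compact if `sup_{x' ∈ B} |x'(xₙ)| → 0` for every
norm bounded un-null sequence `(xₙ)` in `E`. -/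
def WeakStarLWCSet (P : DualPairing E E') (B : Set E') : Prop :=
  IsBounded B ∧ ∀ x : ℕ → E, NormBddSeq x → UnNullSeq x →
    Tendsto (fun n => ⨆ f ∈ B, |P.toDual f (x n)|) atTop (𝓝 0)

end Pairing

section Op

variable {E F X : Type*} [NormedAddCommGroup E] [Lattice E] [HasSolidNorm E] [IsOrderedAddMonoid E] [NormedSpace ℝ E]
  [NormedAddCommGroup X] [NormedSpace ℝ X]

/-- `T : E → X` is M-weakly compact if `‖Txₙ‖ → 0` for every norm bounded disjoint
sequence in `E`. -/
def MWeaklyCompact (T : E →L[ℝ] X) : Prop :=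
  ∀ x : ℕ → E, NormBddSeq x → DisjointSeq x → Tendsto (fun n => ‖T (x n)‖) atTop (𝓝 0)

/-- `T : E → X` is weak M-weakly compact if `‖Txₙ‖ → 0` for every un-null sequence in the
closed unit ball of `E`. -/
def WeakMWeaklyCompact (T : E →L[ℝ] X) : Prop :=
  ∀ x : ℕ → E, (∀ n, ‖x n‖ ≤ 1) → UnNullSeq x → Tendsto (fun n => ‖T (x n)‖) atTop (𝓝 0)

/-- `T : X → E` is L-weakly compact if the image of the closed unit ball is an
L-weakly compact set. -/
def LWCOperator (T : X →L[ℝ] E) : Prop :=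
  LWCSet (T '' Metric.closedBall 0 1)

/-- `T : X → E` is weak L-weakly compact if `sup_{x ∈ B_X} |fₙ(Tx)| → 0` for every norm
bounded un-null sequence `(fₙ)` in `E'`. -/
def WeakLWCOperator {E' : Type*} [NormedAddCommGroup E'] [Lattice E'] [HasSolidNorm E'] [IsOrderedAddMonoid E'] [NormedSpace ℝ E']
    (P : DualPairing E E') (T : X →L[ℝ] E) : Prop :=
  ∀ f : ℕ → E', NormBddSeq f → UnNullSeq f →
    Tendsto (fun n => ⨆ x ∈ Metric.closedBall (0 : X) 1, |P.toDual (f n) (T x)|) atTop (𝓝 0)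

/-- `T : X → E'` is weak* L-weakly compact if its image of the unit ball is a weak*
L-weakly compact set. -/
def WeakStarLWCOperator {E' : Type*} [NormedAddCommGroup E'] [Lattice E'] [HasSolidNorm E'] [IsOrderedAddMonoid E'] [NormedSpace ℝ E']
    (P : DualPairing E E') (T : X →L[ℝ] E') : Prop :=
  ∀ x : ℕ → E, NormBddSeq x → UnNullSeq x →
    Tendsto (fun n => ⨆ y ∈ Metric.closedBall (0 : X) 1, |P.toDual (T y) (x n)|) atTop (𝓝 0)

/-- A positive operator. -/
def PositiveOp {F : Type*} [NormedAddCommGroup F] [Lattice F] [HasSolidNorm F] [IsOrderedAddMonoid F] [NormedSpace ℝ F] (T : E →L[ℝ] F) : Prop :=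
  ∀ x : E, 0 ≤ x → 0 ≤ T x

end Op

/-- Membership in `G^a`, the maximal ideal on which the induced norm is order continuous:
`x ∈ G^a` iff every disjoint sequence in `[0, |x|]` is norm null. -/
def InOrderContPart {G : Type*} [NormedAddCommGroup G] [Lattice G] [HasSolidNorm G] [IsOrderedAddMonoid G] (x : G) : Prop :=
  ∀ y : ℕ → G, (∀ n, 0 ≤ y n ∧ y n ≤ |x|) → DisjointSeq y →
    Tendsto (fun n => ‖y n‖) atTop (𝓝 0)


section AuxLattice

variable {G : Type*} [NormedAddCommGroup G] [Lattice G] [HasSolidNorm G] [IsOrderedAddMonoid G] [NormedSpace ℝ G]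

set_option linter.unusedSectionVars false

/-- Riesz inequality: `(a+b) ⊓ c ≤ a⊓c + b⊓c` for nonnegative elements. -/
lemma aux_inf_add_le {a b c : G} (ha : 0 ≤ a) (hb : 0 ≤ b) (hc : 0 ≤ c) :
    (a + b) ⊓ c ≤ a ⊓ c + b ⊓ c := by
  have h : a ⊓ c + b ⊓ c = ((a + b) ⊓ (a + c)) ⊓ ((c + b) ⊓ (c + c)) := by
    rw [inf_add, add_inf, add_inf]
  rw [h]
  refine le_inf (le_inf inf_le_left ?_) (le_inf ?_ ?_)
  · exact le_trans inf_le_right (le_add_of_nonneg_left ha)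
  · exact le_trans inf_le_right (le_add_of_nonneg_right hb)
  · exact le_trans inf_le_right (le_add_of_nonneg_left hc)

lemma aux_inf_nsmul_eq_zero {a c : G} (ha : 0 ≤ a) (hc : 0 ≤ c) (h : a ⊓ c = 0) :
    ∀ n : ℕ, a ⊓ (n • c) = 0 := by
  intro n
  induction n with
  | zero => simp [inf_of_le_right ha]
  | succ m ih =>
    have h1 : (m • c + c) ⊓ a ≤ (m • c) ⊓ a + c ⊓ a :=
      aux_inf_add_le (nsmul_nonneg hc m) hc ha
    rw [inf_comm (m • c) a, inf_comm c a, ih, h, add_zero] at h1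
    have h2 : 0 ≤ a ⊓ ((m + 1) • c) := le_inf ha (nsmul_nonneg hc (m + 1))
    rw [succ_nsmul] at *
    exact le_antisymm (by rwa [inf_comm] at h1) h2

lemma aux_nonneg_of_nsmul_nonneg {z : G} {n : ℕ} (hn : 1 ≤ n) (h : 0 ≤ n • z) : 0 ≤ z := by
  have hps : z⁺ - z⁻ = z := posPart_sub_negPart z
  have hinf : z⁻ ⊓ z⁺ = 0 := by rw [inf_comm]; exact posPart_inf_negPart_eq_zero z
  have hd : z⁻ ⊓ (n • z⁺) = 0 :=
    aux_inf_nsmul_eq_zero (negPart_nonneg z) (posPart_nonneg z) hinf n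
  have hle : n • z⁻ ≤ n • z⁺ := by
    have : n • z = n • z⁺ - n • z⁻ := by rw [← nsmul_sub, hps]
    rw [this] at h
    exact sub_nonneg.mp h
  have hself : z⁻ ≤ n • z⁻ := by
    obtain ⟨m, rfl⟩ := Nat.exists_eq_add_of_le hn
    rw [add_comm, succ_nsmul]
    exact le_add_of_nonneg_left (nsmul_nonneg (negPart_nonneg z) m)
  have hzero : z⁻ = 0 := by
    have h1 : z⁻ ≤ z⁻ ⊓ (n • z⁺) := le_inf le_rfl (hself.trans hle)
    rw [hd] at h1
    exact le_antisymm h1 (negPart_nonneg z)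
  rw [← hps, hzero, sub_zero]
  exact posPart_nonneg z

lemma aux_smul_nonneg {c : ℝ} (hc : 0 ≤ c) {x : G} (hx : 0 ≤ x) : 0 ≤ c • x := by
  -- first for "rationals" n / k
  have hrat : ∀ (n k : ℕ), 1 ≤ k → (0 : G) ≤ ((n : ℝ) / (k : ℝ)) • x := by
    intro n k hk
    have hk0 : (0 : ℝ) < k := by exact_mod_cast Nat.lt_of_lt_of_le Nat.zero_lt_one hk
    have : k • (((n : ℝ) / (k : ℝ)) • x) = n • x := by
      rw [← Nat.cast_smul_eq_nsmul ℝ k, ← Nat.cast_smul_eq_nsmul ℝ n, smul_smul,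
        mul_div_cancel₀ _ hk0.ne']
    exact aux_nonneg_of_nsmul_nonneg hk (this ▸ nsmul_nonneg hx n)
  -- approximate c by such rationals
  set a : ℕ → ℝ := fun j => (⌈c * (j + 1)⌉₊ : ℝ) / ((j + 1 : ℕ) : ℝ) with ha
  have hmem : ∀ j, (0 : G) ≤ a j • x := fun j => by
    simpa [ha] using hrat ⌈c * (j + 1)⌉₊ (j + 1) (Nat.le_add_left 1 j)
  have htend : Filter.Tendsto a Filter.atTop (nhds c) := by
    have hlo : ∀ j : ℕ, c ≤ a j := by
      intro j
      have hj : (0 : ℝ) < ((j + 1 : ℕ) : ℝ) := by positivity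
      rw [ha, le_div_iff₀ hj]
      calc c * ((j + 1 : ℕ) : ℝ) = c * (j + 1) := by push_cast; ring
        _ ≤ (⌈c * (j + 1)⌉₊ : ℝ) := Nat.le_ceil _
    have hhi : ∀ j : ℕ, a j ≤ c + 1 / (j + 1 : ℝ) := by
      intro j
      have hj : (0 : ℝ) < ((j + 1 : ℕ) : ℝ) := by positivity
      rw [ha, div_le_iff₀ hj]
      have hcj : (0 : ℝ) ≤ c * (j + 1) := by positivity
      have := (Nat.ceil_lt_add_one hcj).le
      calc (⌈c * (j + 1)⌉₊ : ℝ) ≤ c * (j + 1) + 1 := this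
        _ = (c + 1 / (j + 1 : ℝ)) * ((j + 1 : ℕ) : ℝ) := by push_cast; field_simp
    have h1 : Filter.Tendsto (fun j : ℕ => c + 1 / (j + 1 : ℝ)) Filter.atTop (nhds c) := by
      have := tendsto_one_div_add_atTop_nhds_zero_nat (𝕜 := ℝ)
      simpa using (tendsto_const_nhds (x := c)).add this
    exact tendsto_of_tendsto_of_tendsto_of_le_of_le tendsto_const_nhds h1 hlo hhi
  have hsm : Filter.Tendsto (fun j => a j • x) Filter.atTop (nhds (c • x)) :=
    htend.smul_const x
  exact isClosed_nonneg.mem_of_tendsto hsm (Filter.Eventually.of_forall hmem)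

lemma aux_smul_le_smul {c : ℝ} (hc : 0 ≤ c) {x y : G} (h : x ≤ y) : c • x ≤ c • y := by
  have := aux_smul_nonneg hc (sub_nonneg.mpr h)
  rwa [smul_sub, sub_nonneg] at this

lemma aux_abs_smul {c : ℝ} (hc : 0 ≤ c) (x : G) : |c • x| = c • |x| := by
  rcases eq_or_lt_of_le hc with h | hcpos
  · simp [← h]
  refine le_antisymm ?_ ?_
  · refine abs_le'.mpr ⟨aux_smul_le_smul hc (le_abs_self x), ?_⟩
    rw [← smul_neg]
    exact aux_smul_le_smul hc (neg_le_abs x)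
  · have h1 : |x| ≤ c⁻¹ • |c • x| := by
      have h2 : x = c⁻¹ • (c • x) := by rw [smul_smul, inv_mul_cancel₀ hcpos.ne', one_smul]
      calc |x| = |c⁻¹ • (c • x)| := by rw [← h2]
        _ ≤ c⁻¹ • |c • x| := by
          refine abs_le'.mpr ⟨aux_smul_le_smul (by positivity) (le_abs_self _), ?_⟩
          rw [← smul_neg]
          exact aux_smul_le_smul (by positivity) (neg_le_abs _)
    have := aux_smul_le_smul hcpos.le h1
    rwa [smul_smul, mul_inv_cancel₀ hcpos.ne', one_smul] at this

end AuxLattice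

section AuxSup

variable {E : Type*} [NormedAddCommGroup E] [NormedSpace ℝ E]

lemma aux_biSup_eq_norm (φ : E →L[ℝ] ℝ) :
    (⨆ x ∈ Metric.closedBall (0 : E) 1, |φ x|) = ‖φ‖ := by
  have hb : ∀ x ∈ Metric.closedBall (0 : E) 1, |φ x| ≤ ‖φ‖ := fun x hx => by
    simpa [Real.norm_eq_abs] using φ.unit_le_opNorm x (mem_closedBall_zero_iff.1 hx)
  refine le_antisymm ?_ ?_
  · refine Real.iSup_le (fun x => Real.iSup_le (fun hx => hb x hx) (norm_nonneg φ))
      (norm_nonneg φ)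
  · rw [← φ.sSup_unitClosedBall_eq_norm]
    refine csSup_le ((Metric.nonempty_closedBall.mpr zero_le_one).image _) ?_
    rintro - ⟨x, hx, rfl⟩
    refine le_trans (le_of_eq (Real.norm_eq_abs _)) ?_
    have hbdd : BddAbove (Set.range fun x : E => ⨆ _ : x ∈ Metric.closedBall (0 : E) 1, |φ x|) := by
      refine ⟨‖φ‖, Set.forall_mem_range.2 fun x => ?_⟩
      exact Real.iSup_le (fun hx => hb x hx) (norm_nonneg φ)
    calc |φ x| = ⨆ _ : x ∈ Metric.closedBall (0 : E) 1, |φ x| := (ciSup_pos (f := fun _ => |φ x|) hx).symm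
      _ ≤ ⨆ y ∈ Metric.closedBall (0 : E) 1, |φ y| := le_ciSup hbdd x

end AuxSup

/-- `T : E → F` is weak L-weakly compact iff its adjoint `T' : F' → E'` is weak M-weakly
compact. -/
theorem stmt10 {E : Type*} [NormedAddCommGroup E] [Lattice E] [HasSolidNorm E] [IsOrderedAddMonoid E] [NormedSpace ℝ E] [CompleteSpace E] {E' : Type*} [NormedAddCommGroup E'] [Lattice E'] [HasSolidNorm E'] [IsOrderedAddMonoid E'] [NormedSpace ℝ E'] [CompleteSpace E'] {F : Type*} [NormedAddCommGroup F] [Lattice F] [HasSolidNorm F] [IsOrderedAddMonoid F] [NormedSpace ℝ F] [CompleteSpace F] {F' : Type*} [NormedAddCommGroup F'] [Lattice F'] [HasSolidNorm F'] [IsOrderedAddMonoid F'] [NormedSpace ℝ F'] [CompleteSpace F']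
    (P : DualPairing E E') (Q : DualPairing F F')
    (T : E →L[ℝ] F) (T' : F' →L[ℝ] E')
    (hadj : ∀ (g : F') (x : E), P.toDual (T' g) x = Q.toDual g (T x)) :
    WeakLWCOperator Q T ↔ WeakMWeaklyCompact T' := by
  have key : ∀ g : F',
      (⨆ x ∈ Metric.closedBall (0 : E) 1, |Q.toDual g (T x)|) = ‖T' g‖ := by
    intro g
    have h1 : (⨆ x ∈ Metric.closedBall (0 : E) 1, |Q.toDual g (T x)|)
        = ⨆ x ∈ Metric.closedBall (0 : E) 1, |P.toDual (T' g) x| := by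
      simp_rw [hadj]
    rw [h1, aux_biSup_eq_norm (P.toDual (T' g))]
    exact P.toDual.norm_map _
  constructor
  · intro hL f hf hun
    have h := hL f ⟨1, hf⟩ hun
    simpa only [key] using h
  · rintro hM f ⟨C, hC⟩ hun
    simp only [key]
    set M : ℝ := max C 1 with hM1
    have hM0 : (0 : ℝ) < M := lt_of_lt_of_le one_pos (le_max_right _ _)
    set c : ℝ := M⁻¹ with hc1
    have hcpos : (0 : ℝ) < c := inv_pos.2 hM0
    have hcM : c * M = 1 := inv_mul_cancel₀ hM0.ne'
    set g : ℕ → F' := fun n => c • f n with hg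
    have hg1 : ∀ n, ‖g n‖ ≤ 1 := by
      intro n
      have : ‖g n‖ = c * ‖f n‖ := by
        rw [hg]; simp [norm_smul, abs_of_pos hcpos]
      rw [this, ← hcM]
      exact mul_le_mul_of_nonneg_left ((hC n).trans (le_max_left _ _)) hcpos.le
    have hgun : UnNullSeq g := by
      intro u hu
      refine squeeze_zero (fun n => norm_nonneg _) (fun n => ?_) (hun u hu)
      refine HasSolidNorm.solid ?_
      have hpos1 : (0 : F') ≤ |g n| ⊓ u := le_inf (abs_nonneg _) hu
      have hpos2 : (0 : F') ≤ |f n| ⊓ u := le_inf (abs_nonneg _) hu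
      rw [abs_of_nonneg hpos1, abs_of_nonneg hpos2]
      refine inf_le_inf_right u ?_
      rw [hg]
      rw [aux_abs_smul hcpos.le]
      have hcle : c ≤ 1 := by
        rw [hc1]
        exact inv_le_one_of_one_le₀ (le_max_right _ _)
      have := aux_smul_nonneg (sub_nonneg.mpr hcle) (abs_nonneg (f n))
      rw [sub_smul, one_smul, sub_nonneg] at this
      exact this
    have h0 := hM g hg1 hgun
    have heq : ∀ n, ‖T' (f n)‖ = M * ‖T' (g n)‖ := by
      intro n
      have : T' (g n) = c • T' (f n) := by rw [hg]; simp
      rw [this, norm_smul, Real.norm_eq_abs, abs_of_pos hcpos, ← mul_assoc,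
        mul_inv_cancel₀ hM0.ne', one_mul]
    have := h0.const_mul M
    rw [mul_zero] at this
    simpa only [← heq] using this
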